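/- Let c be a null Cartan curve in Minkowski 4-space with constants α ≠ 0, β satisfying αk₁ + βk₂ = 1, and let c̄(s) = c(s) + αW₁(s) + βW₂(s) with mate frame satisfying (ds̄/ds)L̄ = -αN and N̄ = -(ds̄/ds)α⁻¹L. If ds̄/ds = ℓ₀ is constant, then W̄₁(s̄) = -(αk₁/ℓ₀²)W₁(s) - (αk₂/ℓ₀²)W₂(s), and consequently ℓ₀⁴ = α²(k₁² + k₂²). -/

import Mathlib

noncomputable section

/-- Minkowski inner product on ℝ⁴ with signature (-,+,+,+). -/
def mink (x y : Fin 4 → ℝ) : ℝ := -(x 0 * y 0) + x 1 * y 1 + x 2 * y 2 + x 3 * y 3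

lemma mink_comb (a b : ℝ) (x y : Fin 4 → ℝ) :
    mink (a • x + b • y) (a • x + b • y) =
      a ^ 2 * mink x x + 2 * a * b * mink x y + b ^ 2 * mink y y := by
  simp only [mink, Pi.add_apply, Pi.smul_apply, smul_eq_mul]; ring

/-- With `α ≠ 0`, `β` constants satisfying `αk₁ + βk₂ = 1`, mate
`c̄(s) = c(s) + αW₁(s) + βW₂(s)` and frame relations `(ds̄/ds) L̄ = -αN`,
`N̄ = -(ds̄/ds) α⁻¹ L`, if `ds̄/ds = ℓ₀` is constant, then
`W̄₁(s̄) = -(αk₁/ℓ₀²) W₁ - (αk₂/ℓ₀²) W₂` and `ℓ₀⁴ = α²(k₁² + k₂²)`. -/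
theorem stmt17 (c cb L N W₁ W₂ Lb Nb W₁b : ℝ → (Fin 4 → ℝ)) (k₁ k₂ : ℝ → ℝ)
    (α β ℓ₀ : ℝ) (φ : ℝ → ℝ)
    (hα : α ≠ 0) (hℓ₀ : ℓ₀ ≠ 0)
    (hrel : ∀ s, α * k₁ s + β * k₂ s = 1)
    (hLbd : Differentiable ℝ Lb) (hNd : Differentiable ℝ N)
    -- Cartan–Frenet equations of c:
    (hcL : ∀ s, deriv c s = L s)
    (hLfr : ∀ s, deriv L s = W₁ s)
    (hNfr : ∀ s, deriv N s = k₁ s • W₁ s + k₂ s • W₂ s)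
    (hW₁fr : ∀ s, deriv W₁ s = -(k₁ s) • L s - N s)
    (hW₂fr : ∀ s, deriv W₂ s = -(k₂ s) • L s)
    -- barred Frenet equation L̄' = W̄₁ (derivative in s̄):
    (hLfrb : ∀ x, deriv Lb x = W₁b x)
    -- pseudo-orthonormality:
    (hLL : ∀ s, mink (L s) (L s) = 0) (hNN : ∀ s, mink (N s) (N s) = 0)
    (hLN : ∀ s, mink (L s) (N s) = 1)
    (hW₁W₁ : ∀ s, mink (W₁ s) (W₁ s) = 1) (hW₂W₂ : ∀ s, mink (W₂ s) (W₂ s) = 1)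
    (hW₁W₂ : ∀ s, mink (W₁ s) (W₂ s) = 0)
    (hLW₁ : ∀ s, mink (L s) (W₁ s) = 0) (hLW₂ : ∀ s, mink (L s) (W₂ s) = 0)
    (hNW₁ : ∀ s, mink (N s) (W₁ s) = 0) (hNW₂ : ∀ s, mink (N s) (W₂ s) = 0)
    (hW₁bunit : ∀ x, mink (W₁b x) (W₁b x) = 1)
    -- the mate and frame relations:
    (hpair : ∀ s, cb (φ s) = c s + α • W₁ s + β • W₂ s)
    (hφconst : ∀ s, deriv φ s = ℓ₀)
    (hLbrel : ∀ s, ℓ₀ • Lb (φ s) = -α • N s)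
    (hNbrel : ∀ s, Nb (φ s) = -(ℓ₀ / α) • L s) :
    (∀ s, W₁b (φ s) =
        -(α * k₁ s / ℓ₀ ^ 2) • W₁ s - (α * k₂ s / ℓ₀ ^ 2) • W₂ s) ∧
      ∀ s, ℓ₀ ^ 4 = α ^ 2 * ((k₁ s) ^ 2 + (k₂ s) ^ 2) := by
  -- φ is differentiable (deriv is nonzero)
  have hφd : ∀ s, DifferentiableAt ℝ φ s := by
    intro s
    by_contra h
    have := deriv_zero_of_not_differentiableAt h
    rw [hφconst s] at this
    exact hℓ₀ this
  -- Lb ∘ φ equals -(α/ℓ₀) • N pointwise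
  have hfun : (fun s => Lb (φ s)) = fun s => (-(α / ℓ₀)) • N s := by
    funext s
    have h := hLbrel s
    have : Lb (φ s) = ℓ₀⁻¹ • (ℓ₀ • Lb (φ s)) := by
      rw [inv_smul_smul₀ hℓ₀]
    rw [this, h, smul_smul]
    congr 1
    field_simp
  have key : ∀ s, ℓ₀ • W₁b (φ s) = (-(α / ℓ₀)) • (k₁ s • W₁ s + k₂ s • W₂ s) := by
    intro s
    have hL : HasDerivAt (fun s => Lb (φ s)) (deriv φ s • deriv Lb (φ s)) s :=
      HasDerivAt.scomp s (hLbd (φ s)).hasDerivAt (hφd s).hasDerivAt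
    rw [hφconst s, hLfrb (φ s)] at hL
    have hR : HasDerivAt (fun s => (-(α / ℓ₀)) • N s) ((-(α / ℓ₀)) • deriv N s) s :=
      ((hNd s).hasDerivAt).const_smul (-(α / ℓ₀))
    rw [hNfr s] at hR
    rw [hfun] at hL
    have := hL.unique hR
    rw [this]
  have part1 : ∀ s, W₁b (φ s) =
      -(α * k₁ s / ℓ₀ ^ 2) • W₁ s - (α * k₂ s / ℓ₀ ^ 2) • W₂ s := by
    intro s
    have h := key s
    have : W₁b (φ s) = ℓ₀⁻¹ • (ℓ₀ • W₁b (φ s)) := by rw [inv_smul_smul₀ hℓ₀]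
    rw [this, h]
    funext i
    simp only [Pi.smul_apply, Pi.add_apply, Pi.sub_apply, Pi.neg_apply, smul_eq_mul]
    field_simp
    ring
  refine ⟨part1, fun s => ?_⟩
  have h := hW₁bunit (φ s)
  rw [part1 s] at h
  have e : -(α * k₁ s / ℓ₀ ^ 2) • W₁ s - (α * k₂ s / ℓ₀ ^ 2) • W₂ s =
      (-(α * k₁ s / ℓ₀ ^ 2)) • W₁ s + (-(α * k₂ s / ℓ₀ ^ 2)) • W₂ s := by
    funext i; simp only [Pi.smul_apply, Pi.add_apply, Pi.sub_apply, smul_eq_mul]; ring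
  rw [e, mink_comb] at h
  rw [hW₁W₁ s, hW₁W₂ s, hW₂W₂ s] at h
  have hh : α ^ 2 * (k₁ s ^ 2 + k₂ s ^ 2) = ℓ₀ ^ 4 := by
    field_simp at h
    linarith [h]
  linarith [hh]
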